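/- Fix 0 < λ ≤ 1, K ≥ 0, reals 0 < a < b and c < d < 0, and ω > 0. Let ξ : ℝ² → ℂ satisfy |ξ(p) − ξ(q)| ≤ K·|p − q|^λ for all p, q, and ξ(x,y) = 0 whenever (x,y) ∉ [a,b] × [c,d]. Then the function F(t) = ∬_{ℝ²} ξ(e^{−tω} x, y) (x − y)^{-2} dx dy is twice differentiable at t = 0 with F″(0) = ω² ∬_{ℝ²} ξ(x,y) · (x² + 4xy + y²) / (x − y)^{4} dx dy. -/

import Mathlib

open MeasureTheory Filter
open scoped ENNReal

section liouvAux

lemma liouvAux_continuous {lam K : ℝ} (hlam0 : 0 < lam)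
    (ξ : ℝ × ℝ → ℂ) (hHolder : ∀ p q : ℝ × ℝ, ‖ξ p - ξ q‖ ≤ K * dist p q ^ lam) :
    Continuous ξ := by
  rw [continuous_iff_continuousAt]
  intro p
  rw [ContinuousAt, tendsto_iff_norm_sub_tendsto_zero]
  have hd : Tendsto (fun q : ℝ × ℝ => dist q p) (nhds p) (nhds 0) :=
    tendsto_iff_dist_tendsto_zero.mp tendsto_id
  have hr : Tendsto (fun q : ℝ × ℝ => dist q p ^ lam) (nhds p) (nhds 0) := by
    have := (Real.continuousAt_rpow_const 0 lam (Or.inr hlam0.le)).tendsto.comp hd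
    simpa [Real.zero_rpow hlam0.ne', Function.comp_def] using this
  have h1 : Tendsto (fun q : ℝ × ℝ => K * dist q p ^ lam) (nhds p) (nhds 0) := by
    simpa using hr.const_mul K
  exact squeeze_zero (fun q => norm_nonneg _) (fun q => hHolder q p) h1

lemma liouvAux_smul_prod (c : ℝ≥0∞) (μ ν : Measure ℝ) [SFinite μ] [SFinite ν] :
    (c • μ).prod ν = c • (μ.prod ν) := by
  ext s hs
  rw [Measure.prod_apply hs, Measure.smul_apply, Measure.prod_apply hs,
    lintegral_smul_measure, smul_eq_mul]

lemma liouvAux_cov (s : ℝ) (hs0 : 0 < s) (g : ℝ × ℝ → ℂ) :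
    ∫ p : ℝ × ℝ, g p = s • ∫ q : ℝ × ℝ, g (s * q.1, q.2) := by
  have h1 : MeasurePreserving (fun x : ℝ => s * x) volume (ENNReal.ofReal s⁻¹ • volume) := by
    refine ⟨measurable_const_mul s, ?_⟩
    rw [show (fun x : ℝ => s * x) = (s * ·) from rfl, Real.map_volume_mul_left (ne_of_gt hs0),
      abs_of_nonneg (inv_nonneg.2 hs0.le)]
  have h2 := h1.prod (MeasurePreserving.id (volume : Measure ℝ))
  rw [liouvAux_smul_prod] at h2
  have hemb : MeasurableEmbedding (Prod.map (fun x : ℝ => s * x) (id : ℝ → ℝ)) :=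
    (Homeomorph.prodCongr (Homeomorph.mulLeft₀ s (ne_of_gt hs0))
      (Homeomorph.refl ℝ)).measurableEmbedding
  have h3 := h2.integral_comp hemb g
  have hvol : (volume : Measure (ℝ × ℝ)) = (volume : Measure ℝ).prod volume :=
    Measure.volume_eq_prod ℝ ℝ
  have h4 : ∫ q : ℝ × ℝ, g (s * q.1, q.2) = s⁻¹ • ∫ p : ℝ × ℝ, g p := by
    rw [hvol]
    calc ∫ q : ℝ × ℝ, g (s * q.1, q.2) ∂((volume : Measure ℝ).prod volume)
        = ∫ q : ℝ × ℝ, g (Prod.map (fun x : ℝ => s * x) (id : ℝ → ℝ) q)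
            ∂((volume : Measure ℝ).prod volume) := rfl
      _ = ∫ p : ℝ × ℝ, g p ∂(ENNReal.ofReal s⁻¹ • (volume : Measure ℝ).prod volume) := h3
      _ = s⁻¹ • ∫ p : ℝ × ℝ, g p ∂((volume : Measure ℝ).prod volume) := by
          rw [integral_smul_measure, ENNReal.toReal_ofReal (inv_nonneg.2 hs0.le)]
  rw [h4, smul_smul, mul_inv_cancel₀ (ne_of_gt hs0), one_smul]

lemma liouvAux_hasDerivAt_k (ω x y : ℝ) (hx : 0 < x) (hy : y < 0) (t : ℝ) :
    HasDerivAt (fun t : ℝ => Real.exp (t * ω) * ((Real.exp (t * ω) * x - y) ^ 2)⁻¹)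
      (-(Real.exp (t * ω) * ω) * (Real.exp (t * ω) * x + y) / (Real.exp (t * ω) * x - y) ^ 3) t := by
  have hE : ∀ u : ℝ, HasDerivAt (fun t : ℝ => Real.exp (t * ω)) (Real.exp (u * ω) * ω) u := by
    intro u
    simpa [Function.comp_def] using (Real.hasDerivAt_exp (u * ω)).comp u ((hasDerivAt_id u).mul_const ω)
  have hDpos : 0 < Real.exp (t * ω) * x - y := by
    have := mul_pos (Real.exp_pos (t * ω)) hx; linarith
  have hDne : Real.exp (t * ω) * x - y ≠ 0 := ne_of_gt hDpos
  have hD : HasDerivAt (fun t : ℝ => Real.exp (t * ω) * x - y) (Real.exp (t * ω) * ω * x) t :=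
    ((hE t).mul_const x).sub_const y
  have hsq := hD.pow 2
  have hinv := hsq.inv (pow_ne_zero 2 hDne)
  have h := (hE t).mul hinv
  refine h.congr_deriv ?_
  simp only [Pi.inv_apply, Pi.pow_apply]
  field_simp
  ring

lemma liouvAux_hasDerivAt_k1 (ω x y : ℝ) (hx : 0 < x) (hy : y < 0) (t : ℝ) :
    HasDerivAt (fun t : ℝ =>
        -(Real.exp (t * ω) * ω) * (Real.exp (t * ω) * x + y) / (Real.exp (t * ω) * x - y) ^ 3)
      (ω ^ 2 * Real.exp (t * ω) *
        (3 * Real.exp (t * ω) * x * (Real.exp (t * ω) * x + y)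
          - (2 * Real.exp (t * ω) * x + y) * (Real.exp (t * ω) * x - y)) /
        (Real.exp (t * ω) * x - y) ^ 4) t := by
  have hE : ∀ u : ℝ, HasDerivAt (fun t : ℝ => Real.exp (t * ω)) (Real.exp (u * ω) * ω) u := by
    intro u
    simpa [Function.comp_def] using (Real.hasDerivAt_exp (u * ω)).comp u ((hasDerivAt_id u).mul_const ω)
  have hDpos : 0 < Real.exp (t * ω) * x - y := by
    have := mul_pos (Real.exp_pos (t * ω)) hx; linarith
  have hDne : Real.exp (t * ω) * x - y ≠ 0 := ne_of_gt hDpos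
  have hD : HasDerivAt (fun t : ℝ => Real.exp (t * ω) * x - y) (Real.exp (t * ω) * ω * x) t :=
    ((hE t).mul_const x).sub_const y
  have hN : HasDerivAt (fun t : ℝ => -(Real.exp (t * ω) * ω) * (Real.exp (t * ω) * x + y))
      (-(Real.exp (t * ω) * ω * ω) * (Real.exp (t * ω) * x + y)
        + -(Real.exp (t * ω) * ω) * (Real.exp (t * ω) * ω * x)) t := by
    have h1 : HasDerivAt (fun t : ℝ => -(Real.exp (t * ω) * ω)) (-(Real.exp (t * ω) * ω * ω)) t :=
      ((hE t).mul_const ω).neg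
    have h2 : HasDerivAt (fun t : ℝ => Real.exp (t * ω) * x + y) (Real.exp (t * ω) * ω * x) t :=
      ((hE t).mul_const x).add_const y
    simpa [Pi.mul_def] using h1.mul h2
  have hD3 := hD.pow 3
  have h := hN.div hD3 (pow_ne_zero 3 hDne)
  refine h.congr_deriv ?_
  simp only [Pi.inv_apply, Pi.pow_apply]
  field_simp
  ring

lemma liouvAux_param (ξ : ℝ × ℝ → ℂ) (hcont : Continuous ξ)
    (B : Set (ℝ × ℝ)) (hBmeas : MeasurableSet B) (hBvol : volume B < ⊤)
    (M : ℝ) (hMnn : 0 ≤ M) (hM : ∀ p ∈ B, ‖ξ p‖ ≤ M)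
    (hzero : ∀ p : ℝ × ℝ, p ∉ B → ξ p = 0)
    (f f' : ℝ → ℝ × ℝ → ℝ) (t₀ ε : ℝ) (hε : 0 < ε)
    (hfmeas : ∀ t, Measurable (f t)) (hf'meas : Measurable (f' t₀))
    (C0 C1 : ℝ)
    (hC0 : ∀ p ∈ B, ‖f t₀ p‖ ≤ C0)
    (hC1 : ∀ t ∈ Metric.ball t₀ ε, ∀ p ∈ B, ‖f' t p‖ ≤ C1)
    (hdiff : ∀ p ∈ B, ∀ t : ℝ, HasDerivAt (fun t => f t p) (f' t p) t) :
    HasDerivAt (fun t : ℝ => ∫ p : ℝ × ℝ, ξ p * ((f t p : ℝ) : ℂ))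
      (∫ p : ℝ × ℝ, ξ p * ((f' t₀ p : ℝ) : ℂ)) t₀ := by
  have hmeasR : ∀ g : ℝ × ℝ → ℝ, Measurable g →
      AEStronglyMeasurable (fun p : ℝ × ℝ => ξ p * ((g p : ℝ) : ℂ)) volume := fun g hg =>
    hcont.aestronglyMeasurable.mul (Complex.measurable_ofReal.comp hg).aestronglyMeasurable
  have hbound_int : ∀ C : ℝ, Integrable (B.indicator fun _ => C) volume := fun C =>
    (integrable_indicator_iff hBmeas).2 (integrableOn_const hBvol.ne)
  have hboundfact : ∀ (g : ℝ × ℝ → ℝ) (C : ℝ), (∀ p ∈ B, ‖g p‖ ≤ C) →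
      ∀ p : ℝ × ℝ, ‖ξ p * ((g p : ℝ) : ℂ)‖ ≤ B.indicator (fun _ => M * C) p := by
    intro g C hgC p
    by_cases hp : p ∈ B
    · rw [Set.indicator_of_mem hp, norm_mul, Complex.norm_real]
      exact mul_le_mul (hM p hp) (hgC p hp) (norm_nonneg _) hMnn
    · rw [Set.indicator_of_notMem hp, hzero p hp, zero_mul, norm_zero]
  have hdiff' : ∀ (p : ℝ × ℝ) (t : ℝ),
      HasDerivAt (fun t : ℝ => ξ p * ((f t p : ℝ) : ℂ)) (ξ p * ((f' t p : ℝ) : ℂ)) t := by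
    intro p t
    by_cases hp : p ∈ B
    · exact ((hdiff p hp t).ofReal_comp).const_mul (ξ p)
    · simp only [hzero p hp, zero_mul]
      exact hasDerivAt_const t 0
  have key := hasDerivAt_integral_of_dominated_loc_of_deriv_le (μ := volume)
      (F := fun t p => ξ p * ((f t p : ℝ) : ℂ)) (F' := fun t p => ξ p * ((f' t p : ℝ) : ℂ))
      (x₀ := t₀) (bound := B.indicator fun _ => M * C1) (Metric.ball_mem_nhds t₀ hε)
      (Eventually.of_forall fun t => hmeasR (f t) (hfmeas t))
      ((hbound_int (M * C0)).mono' (hmeasR (f t₀) (hfmeas t₀))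
        (ae_of_all _ (hboundfact (f t₀) C0 hC0)))
      (hmeasR (f' t₀) hf'meas)
      (ae_of_all _ fun p t ht => hboundfact (f' t) C1 (hC1 t ht) p)
      (hbound_int (M * C1))
      (ae_of_all _ fun p t _ => hdiff' p t)
  exact key.2

end liouvAux

/-- Second derivative at `t = 0` of the Liouville measure along a simple
earthquake path:
`d²/dt²|₀ L(E_g^{tω})(ξ) = ω² ∫ ξ(h) (x² + 4xy + y²)/(x − y)⁴ dL(h)`. -/
theorem liouville_second_deriv_simple_earthquake
    (lam K : ℝ) (hlam0 : 0 < lam) (hlam1 : lam ≤ 1) (hK : 0 ≤ K)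
    (a b c d : ℝ) (ha : 0 < a) (hab : a < b) (hcd : c < d) (hd : d < 0)
    (ω : ℝ) (hω : 0 < ω)
    (ξ : ℝ × ℝ → ℂ)
    (hHolder : ∀ p q : ℝ × ℝ, ‖ξ p - ξ q‖ ≤ K * dist p q ^ lam)
    (hsupp : ∀ x y : ℝ, (x, y) ∉ Set.Icc a b ×ˢ Set.Icc c d → ξ (x, y) = 0) :
    ∃ F' : ℝ → ℂ,
      (∀ᶠ t in nhds (0 : ℝ),
        HasDerivAt
          (fun t : ℝ => ∫ p : ℝ × ℝ,
            ξ (Real.exp (-(t * ω)) * p.1, p.2) * ((((p.1 - p.2) ^ 2)⁻¹ : ℝ) : ℂ))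
          (F' t) t) ∧
      HasDerivAt F'
        (((ω : ℂ)) ^ 2 * ∫ p : ℝ × ℝ,
          ξ p * (((p.1 ^ 2 + 4 * p.1 * p.2 + p.2 ^ 2) / (p.1 - p.2) ^ 4 : ℝ) : ℂ))
        0 := by
  classical
  have hcont : Continuous ξ := liouvAux_continuous hlam0 ξ hHolder
  have hBcompact : IsCompact (Set.Icc a b ×ˢ Set.Icc c d) := isCompact_Icc.prod isCompact_Icc
  have hBmeas : MeasurableSet (Set.Icc a b ×ˢ Set.Icc c d) :=
    measurableSet_Icc.prod measurableSet_Icc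
  have hBvol : volume (Set.Icc a b ×ˢ Set.Icc c d) < ⊤ := hBcompact.measure_lt_top
  obtain ⟨M0, hM0⟩ := hBcompact.exists_bound_of_continuousOn hcont.continuousOn
  have hMnn : (0 : ℝ) ≤ max M0 0 := le_max_right _ _
  have hM : ∀ p ∈ Set.Icc a b ×ˢ Set.Icc c d, ‖ξ p‖ ≤ max M0 0 :=
    fun p hp => (hM0 p hp).trans (le_max_left _ _)
  have hzero : ∀ p : ℝ × ℝ, p ∉ Set.Icc a b ×ˢ Set.Icc c d → ξ p = 0 := by
    intro p hp
    have := hsupp p.1 p.2 (by simpa using hp)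
    simpa using this
  have hxpos : ∀ p : ℝ × ℝ, p ∈ Set.Icc a b ×ˢ Set.Icc c d → 0 < p.1 :=
    fun p hp => lt_of_lt_of_le ha hp.1.1
  have hyneg : ∀ p : ℝ × ℝ, p ∈ Set.Icc a b ×ˢ Set.Icc c d → p.2 < 0 :=
    fun p hp => lt_of_le_of_lt hp.2.2 hd
  -- compactness bounds on S = Icc (-1) 1 ×ˢ B
  have hScompact : IsCompact (Set.Icc (-1 : ℝ) 1 ×ˢ (Set.Icc a b ×ˢ Set.Icc c d)) :=
    isCompact_Icc.prod hBcompact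
  have hSden : ∀ q ∈ Set.Icc (-1 : ℝ) 1 ×ˢ (Set.Icc a b ×ˢ Set.Icc c d),
      Real.exp (q.1 * ω) * q.2.1 - q.2.2 ≠ 0 := by
    intro q hq
    have h1 : 0 < q.2.1 := lt_of_lt_of_le ha hq.2.1.1
    have h2 : q.2.2 < 0 := lt_of_le_of_lt hq.2.2.2 hd
    have := mul_pos (Real.exp_pos (q.1 * ω)) h1
    intro h; linarith
  have hcden : Continuous fun q : ℝ × (ℝ × ℝ) => Real.exp (q.1 * ω) * q.2.1 - q.2.2 := by
    fun_prop
  have hcontk : ContinuousOn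
      (fun q : ℝ × (ℝ × ℝ) =>
        Real.exp (q.1 * ω) * ((Real.exp (q.1 * ω) * q.2.1 - q.2.2) ^ 2)⁻¹)
      (Set.Icc (-1 : ℝ) 1 ×ˢ (Set.Icc a b ×ˢ Set.Icc c d)) := by
    refine ContinuousOn.mul (by fun_prop) ?_
    exact ((hcden.continuousOn.pow 2).inv₀ fun q hq => pow_ne_zero 2 (hSden q hq))
  have hcontk1 : ContinuousOn
      (fun q : ℝ × (ℝ × ℝ) =>
        -(Real.exp (q.1 * ω) * ω) * (Real.exp (q.1 * ω) * q.2.1 + q.2.2)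
          / (Real.exp (q.1 * ω) * q.2.1 - q.2.2) ^ 3)
      (Set.Icc (-1 : ℝ) 1 ×ˢ (Set.Icc a b ×ˢ Set.Icc c d)) := by
    refine ContinuousOn.div (by fun_prop) (hcden.continuousOn.pow 3)
      fun q hq => pow_ne_zero 3 (hSden q hq)
  have hcontk2 : ContinuousOn
      (fun q : ℝ × (ℝ × ℝ) =>
        ω ^ 2 * Real.exp (q.1 * ω) *
          (3 * Real.exp (q.1 * ω) * q.2.1 * (Real.exp (q.1 * ω) * q.2.1 + q.2.2)
            - (2 * Real.exp (q.1 * ω) * q.2.1 + q.2.2) * (Real.exp (q.1 * ω) * q.2.1 - q.2.2))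
          / (Real.exp (q.1 * ω) * q.2.1 - q.2.2) ^ 4)
      (Set.Icc (-1 : ℝ) 1 ×ˢ (Set.Icc a b ×ˢ Set.Icc c d)) := by
    refine ContinuousOn.div (by fun_prop) (hcden.continuousOn.pow 4)
      fun q hq => pow_ne_zero 4 (hSden q hq)
  obtain ⟨C0, hC0⟩ := hScompact.exists_bound_of_continuousOn hcontk
  obtain ⟨C1, hC1⟩ := hScompact.exists_bound_of_continuousOn hcontk1
  obtain ⟨C2, hC2⟩ := hScompact.exists_bound_of_continuousOn hcontk2
  -- measurability of slices
  have hmk : ∀ t : ℝ, Measurable fun p : ℝ × ℝ =>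
      Real.exp (t * ω) * ((Real.exp (t * ω) * p.1 - p.2) ^ 2)⁻¹ := by
    intro t; fun_prop
  have hmk1 : ∀ t : ℝ, Measurable fun p : ℝ × ℝ =>
      -(Real.exp (t * ω) * ω) * (Real.exp (t * ω) * p.1 + p.2)
        / (Real.exp (t * ω) * p.1 - p.2) ^ 3 := by
    intro t; fun_prop
  have hmk2 : ∀ t : ℝ, Measurable fun p : ℝ × ℝ =>
      ω ^ 2 * Real.exp (t * ω) *
        (3 * Real.exp (t * ω) * p.1 * (Real.exp (t * ω) * p.1 + p.2)
          - (2 * Real.exp (t * ω) * p.1 + p.2) * (Real.exp (t * ω) * p.1 - p.2))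
        / (Real.exp (t * ω) * p.1 - p.2) ^ 4 := by
    intro t; fun_prop
  -- first application: derivative of transformed integral at every t₀ ∈ ball 0 (1/2)
  have main1 : ∀ t₀ ∈ Metric.ball (0 : ℝ) (1 / 2),
      HasDerivAt
        (fun t : ℝ => ∫ p : ℝ × ℝ,
          ξ p * ((Real.exp (t * ω) * ((Real.exp (t * ω) * p.1 - p.2) ^ 2)⁻¹ : ℝ) : ℂ))
        (∫ p : ℝ × ℝ,
          ξ p * ((-(Real.exp (t₀ * ω) * ω) * (Real.exp (t₀ * ω) * p.1 + p.2)
            / (Real.exp (t₀ * ω) * p.1 - p.2) ^ 3 : ℝ) : ℂ)) t₀ := by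
    intro t₀ ht₀
    have ht₀' : |t₀| < 1 / 2 := by simpa [Real.dist_eq] using ht₀
    have hball : ∀ t ∈ Metric.ball t₀ (1 / 2 : ℝ), t ∈ Set.Icc (-1 : ℝ) 1 := by
      intro t ht
      have h1 : |t - t₀| < 1 / 2 := by simpa [Real.dist_eq] using ht
      rcases abs_lt.mp h1 with ⟨h1a, h1b⟩
      rcases abs_lt.mp ht₀' with ⟨h2a, h2b⟩
      rw [Set.mem_Icc]
      constructor <;> linarith
    refine liouvAux_param ξ hcont _ hBmeas hBvol _ hMnn hM hzero
      (fun t p => Real.exp (t * ω) * ((Real.exp (t * ω) * p.1 - p.2) ^ 2)⁻¹)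
      (fun t p => -(Real.exp (t * ω) * ω) * (Real.exp (t * ω) * p.1 + p.2)
        / (Real.exp (t * ω) * p.1 - p.2) ^ 3)
      t₀ (1 / 2) (by norm_num) hmk (hmk1 t₀) C0 C1 ?_ ?_ ?_
    · intro p hp
      exact hC0 (t₀, p) ⟨hball t₀ (Metric.mem_ball_self (by norm_num)), hp⟩
    · intro t ht p hp
      exact hC1 (t, p) ⟨hball t ht, hp⟩
    · intro p hp t
      exact liouvAux_hasDerivAt_k ω p.1 p.2 (hxpos p hp) (hyneg p hp) t
  -- second application: derivative of F' at 0
  have main2 :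
      HasDerivAt
        (fun t : ℝ => ∫ p : ℝ × ℝ,
          ξ p * ((-(Real.exp (t * ω) * ω) * (Real.exp (t * ω) * p.1 + p.2)
            / (Real.exp (t * ω) * p.1 - p.2) ^ 3 : ℝ) : ℂ))
        (∫ p : ℝ × ℝ,
          ξ p * ((ω ^ 2 * Real.exp (0 * ω) *
            (3 * Real.exp (0 * ω) * p.1 * (Real.exp (0 * ω) * p.1 + p.2)
              - (2 * Real.exp (0 * ω) * p.1 + p.2) * (Real.exp (0 * ω) * p.1 - p.2))
            / (Real.exp (0 * ω) * p.1 - p.2) ^ 4 : ℝ) : ℂ)) 0 := by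
    have hball : ∀ t ∈ Metric.ball (0 : ℝ) 1, t ∈ Set.Icc (-1 : ℝ) 1 := by
      intro t ht
      have h1 : |t| < 1 := by simpa [Real.dist_eq] using ht
      rcases abs_lt.mp h1 with ⟨h1a, h1b⟩
      rw [Set.mem_Icc]
      constructor <;> linarith
    refine liouvAux_param ξ hcont _ hBmeas hBvol _ hMnn hM hzero
      (fun t p => -(Real.exp (t * ω) * ω) * (Real.exp (t * ω) * p.1 + p.2)
        / (Real.exp (t * ω) * p.1 - p.2) ^ 3)
      (fun t p => ω ^ 2 * Real.exp (t * ω) *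
        (3 * Real.exp (t * ω) * p.1 * (Real.exp (t * ω) * p.1 + p.2)
          - (2 * Real.exp (t * ω) * p.1 + p.2) * (Real.exp (t * ω) * p.1 - p.2))
        / (Real.exp (t * ω) * p.1 - p.2) ^ 4)
      0 1 one_pos hmk1 (hmk2 0) C1 C2 ?_ ?_ ?_
    · intro p hp
      exact hC1 (0, p) ⟨by norm_num, hp⟩
    · intro t ht p hp
      exact hC2 (t, p) ⟨hball t ht, hp⟩
    · intro p hp t
      exact liouvAux_hasDerivAt_k1 ω p.1 p.2 (hxpos p hp) (hyneg p hp) t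
  -- change of variables
  have hA : ∀ t : ℝ,
      (∫ p : ℝ × ℝ, ξ (Real.exp (-(t * ω)) * p.1, p.2) * ((((p.1 - p.2) ^ 2)⁻¹ : ℝ) : ℂ))
        = ∫ p : ℝ × ℝ,
            ξ p * ((Real.exp (t * ω) * ((Real.exp (t * ω) * p.1 - p.2) ^ 2)⁻¹ : ℝ) : ℂ) := by
    intro t
    refine (liouvAux_cov (Real.exp (t * ω)) (Real.exp_pos _)
      (fun p => ξ (Real.exp (-(t * ω)) * p.1, p.2) * ((((p.1 - p.2) ^ 2)⁻¹ : ℝ) : ℂ))).trans ?_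
    rw [← integral_smul]
    refine integral_congr_ae (Filter.Eventually.of_forall fun q => ?_)
    have harg : Real.exp (-(t * ω)) * (Real.exp (t * ω) * q.1) = q.1 := by
      rw [← mul_assoc, ← Real.exp_add]; simp
    simp only [harg, Prod.mk.eta, Complex.real_smul, Complex.ofReal_mul]
    ring
  -- final value identification
  have hval : (∫ p : ℝ × ℝ,
        ξ p * ((ω ^ 2 * Real.exp (0 * ω) *
          (3 * Real.exp (0 * ω) * p.1 * (Real.exp (0 * ω) * p.1 + p.2)
            - (2 * Real.exp (0 * ω) * p.1 + p.2) * (Real.exp (0 * ω) * p.1 - p.2))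
          / (Real.exp (0 * ω) * p.1 - p.2) ^ 4 : ℝ) : ℂ))
      = ((ω : ℂ)) ^ 2 * ∫ p : ℝ × ℝ,
          ξ p * (((p.1 ^ 2 + 4 * p.1 * p.2 + p.2 ^ 2) / (p.1 - p.2) ^ 4 : ℝ) : ℂ) := by
    rw [← integral_const_mul]
    refine integral_congr_ae (Filter.Eventually.of_forall fun p => ?_)
    by_cases hp : p ∈ Set.Icc a b ×ˢ Set.Icc c d
    · have hx := hxpos p hp
      have hy := hyneg p hp
      have hne : p.1 - p.2 ≠ 0 := sub_ne_zero.2 (ne_of_gt (lt_trans hy hx))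
      have hreal : ω ^ 2 * Real.exp (0 * ω) *
          (3 * Real.exp (0 * ω) * p.1 * (Real.exp (0 * ω) * p.1 + p.2)
            - (2 * Real.exp (0 * ω) * p.1 + p.2) * (Real.exp (0 * ω) * p.1 - p.2))
          / (Real.exp (0 * ω) * p.1 - p.2) ^ 4
          = ω ^ 2 * ((p.1 ^ 2 + 4 * p.1 * p.2 + p.2 ^ 2) / (p.1 - p.2) ^ 4) := by
        rw [zero_mul, Real.exp_zero]
        field_simp
        ring
      simp only [hreal]
      push_cast
      ring
    · simp [hzero p hp]
  refine ⟨fun t => ∫ p : ℝ × ℝ,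
      ξ p * ((-(Real.exp (t * ω) * ω) * (Real.exp (t * ω) * p.1 + p.2)
        / (Real.exp (t * ω) * p.1 - p.2) ^ 3 : ℝ) : ℂ), ?_, ?_⟩
  · filter_upwards [Metric.ball_mem_nhds (0 : ℝ) (by norm_num : (0 : ℝ) < 1 / 2)] with t₀ ht₀
    exact (main1 t₀ ht₀).congr_of_eventuallyEq (Filter.Eventually.of_forall fun t => hA t)
  · exact hval ▸ main2
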